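/- Let $X$ be a finite metric space with at least 2 points that embeds with distortion at most $\alpha$ into a $k$-lacunary metric space, where $k, \alpha > 1$. Then $|X| \le 2 + \log_k(\alpha \Phi(X))$, where $\Phi(X) = \mathrm{diam}(X) / \min_{x \ne y} d(x,y)$ is the aspect ratio of $X$. -/

import Mathlib

/-- The distance function of a metric space on `Fin n` determined by a sequence `a`:
`d i j = a (min i j)` for `i ≠ j`. -/
def lacunaryDist (a : ℕ → ℝ) {n : ℕ} (i j : Fin n) : ℝ :=
  if i = j then 0 else a (min i.val j.val)

/-- `a` restricted to `{0, …, n-1}` is a positive non-increasing `k`-lacunary sequence. -/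
def IsLacunarySeq (k : ℝ) (n : ℕ) (a : ℕ → ℝ) : Prop :=
  (∀ i, i < n → 0 < a i) ∧ (∀ i j, i ≤ j → j < n → a j ≤ a i) ∧
    (∀ i, i + 1 < n → a (i + 1) ≤ a i / k)

/-- The aspect ratio `Φ(X) = diam(X) / min_{x ≠ y} d(x,y)`. -/
noncomputable def aspectRatio (X : Type*) [MetricSpace X] : ℝ :=
  Metric.diam (Set.univ : Set X) / sInf {r | ∃ x y : X, x ≠ y ∧ r = dist x y}

lemma lacunary_chain {k : ℝ} {n : ℕ} {a : ℕ → ℝ} (hk : 1 < k)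
    (ha : IsLacunarySeq k n a) :
    ∀ d i, i + d < n → a (i + d) * k ^ d ≤ a i := by
  intro d
  induction d with
  | zero => intro i hi; simp
  | succ d ih =>
    intro i hi
    have h1 : a (i + (d + 1)) ≤ a (i + d) / k := by
      have := ha.2.2 (i + d) (by omega)
      simpa [Nat.add_assoc] using this
    have hkpos : (0 : ℝ) < k := lt_trans one_pos hk
    have h2 : a (i + d) * k ^ d ≤ a i := ih i (by omega)
    calc a (i + (d + 1)) * k ^ (d + 1)
        ≤ (a (i + d) / k) * k ^ (d + 1) := by
          apply mul_le_mul_of_nonneg_right h1 (by positivity)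
      _ = a (i + d) * k ^ d := by field_simp; ring
      _ ≤ a i := h2

lemma strictMono_lb {m : ℕ} {g : Fin m → ℕ} (hg : StrictMono g) :
    ∀ t (ht : t < m) (h0 : 0 < m), g ⟨0, h0⟩ + t ≤ g ⟨t, ht⟩ := by
  intro t
  induction t with
  | zero => intro ht h0; simp
  | succ t ih =>
    intro ht h0
    have h1 := ih (by omega) h0
    have h2 : g ⟨t, by omega⟩ < g ⟨t + 1, ht⟩ := hg (by simp [Fin.lt_def])
    omega


/-- if a finite metric space `X` with `|X| ≥ 2` embeds with distortion
at most `α` into a `k`-lacunary metric space (`k, α > 1`), then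
`|X| ≤ 2 + log_k (α ⬝ Φ(X))`. -/
theorem stmt_1 (X : Type*) [MetricSpace X] [Fintype X] (hX : 2 ≤ Fintype.card X)
    (k α : ℝ) (hk : 1 < k) (hα : 1 < α)
    (h : ∃ (n : ℕ) (a : ℕ → ℝ) (f : X → Fin n), Function.Injective f ∧
      IsLacunarySeq k n a ∧ ∃ r : ℝ, 0 < r ∧ ∀ x y : X,
        r * dist x y ≤ lacunaryDist a (f x) (f y) ∧
        lacunaryDist a (f x) (f y) ≤ α * (r * dist x y)) :
    (Fintype.card X : ℝ) ≤ 2 + Real.logb k (α * aspectRatio X) := by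
  obtain ⟨n, a, f, hf, ha, r, hr, hemb⟩ := h
  have hm : 2 ≤ Fintype.card X := hX
  set m := Fintype.card X with hmdef
  -- extract a strictly monotone enumeration of the image of f with preimages
  obtain ⟨g, hgmono, hgn, hpre⟩ :
      ∃ g : Fin m → ℕ, StrictMono g ∧ (∀ j, g j < n) ∧
        ∀ j : Fin m, ∃ x : X, (f x : ℕ) = g j := by
    have hcard : (Finset.univ.image f).card = m := by
      rw [Finset.card_image_of_injective _ hf, Finset.card_univ]
    refine ⟨fun j => (((Finset.univ.image f).orderIsoOfFin hcard j : Fin n) : ℕ),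
      ?_, fun j => (((Finset.univ.image f).orderIsoOfFin hcard j : Fin n)).isLt, ?_⟩
    · intro i j hij
      exact ((Finset.univ.image f).orderIsoOfFin hcard).strictMono hij
    · intro j
      have hmem : ((Finset.univ.image f).orderIsoOfFin hcard j : Fin n)
          ∈ Finset.univ.image f := ((Finset.univ.image f).orderIsoOfFin hcard j).2
      simp only [Finset.mem_image] at hmem
      obtain ⟨x, _, hx⟩ := hmem
      exact ⟨x, by rw [hx]⟩
  set j0 : Fin m := ⟨0, by omega⟩ with hj0
  set j1 : Fin m := ⟨1, by omega⟩ with hj1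
  set ja : Fin m := ⟨m - 2, by omega⟩ with hja
  set jb : Fin m := ⟨m - 1, by omega⟩ with hjb
  obtain ⟨x0, hx0⟩ := hpre j0
  obtain ⟨x1, hx1⟩ := hpre j1
  obtain ⟨u, hu⟩ := hpre ja
  obtain ⟨v, hv⟩ := hpre jb
  have hlt01 : g j0 < g j1 := hgmono (by simp [hj0, hj1, Fin.lt_def])
  have hltab : g ja < g jb := hgmono (by simp [hja, hjb, Fin.lt_def]; omega)
  have hx01 : x0 ≠ x1 := by
    intro hxy; rw [hxy, hx1] at hx0; omega
  have huv : u ≠ v := by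
    intro hxy; rw [hxy, hv] at hu; omega
  have hA : lacunaryDist a (f x0) (f x1) = a (g j0) := by
    rw [lacunaryDist, if_neg (fun hc => hx01 (hf hc))]
    congr 1
    omega
  have hB : lacunaryDist a (f u) (f v) = a (g ja) := by
    rw [lacunaryDist, if_neg (fun hc => huv (hf hc))]
    congr 1
    omega
  -- sInf of distances
  let δ := sInf {r | ∃ x y : X, x ≠ y ∧ r = dist x y}
  have hsetfin : {r | ∃ x y : X, x ≠ y ∧ r = dist x y}.Finite := by
    have : {r | ∃ x y : X, x ≠ y ∧ r = dist x y} ⊆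
        (fun p : X × X => dist p.1 p.2) '' Set.univ := by
      rintro s ⟨x, y, _, rfl⟩
      exact ⟨(x, y), trivial, rfl⟩
    exact Set.Finite.subset (Set.Finite.image _ Set.finite_univ) this
  have hsetne : {r | ∃ x y : X, x ≠ y ∧ r = dist x y}.Nonempty :=
    ⟨dist x0 x1, x0, x1, hx01, rfl⟩
  have hδmem : δ ∈ {r | ∃ x y : X, x ≠ y ∧ r = dist x y} :=
    hsetne.csInf_mem hsetfin
  have hδpos : 0 < δ := by
    obtain ⟨x, y, hxy, hd⟩ := hδmem
    rw [hd]
    exact dist_pos.mpr hxy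
  have hδle : δ ≤ dist u v :=
    csInf_le hsetfin.bddBelow ⟨u, v, huv, rfl⟩
  let D := Metric.diam (Set.univ : Set X)
  have hDle : dist x0 x1 ≤ D :=
    Metric.dist_le_diam_of_mem Set.finite_univ.isBounded trivial trivial
  -- main chain
  have hchain : a (g ja) * k ^ (m - 2) ≤ a (g j0) := by
    have h1 : g j0 + (m - 2) ≤ g ja := strictMono_lb hgmono (m - 2) (by omega) (by omega)
    have h2 : a (g ja) ≤ a (g j0 + (m - 2)) := ha.2.1 _ _ h1 (hgn _)
    have h3 : a (g j0 + (m - 2)) * k ^ (m - 2) ≤ a (g j0) :=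
      lacunary_chain hk ha (m - 2) _ (lt_of_le_of_lt h1 (hgn _))
    calc a (g ja) * k ^ (m - 2)
        ≤ a (g j0 + (m - 2)) * k ^ (m - 2) :=
          mul_le_mul_of_nonneg_right h2 (by positivity)
      _ ≤ a (g j0) := h3
  have hlow : r * δ ≤ a (g ja) := by
    have := (hemb u v).1
    rw [hB] at this
    calc r * δ ≤ r * dist u v := mul_le_mul_of_nonneg_left hδle (le_of_lt hr)
      _ ≤ _ := this
  have hhigh : a (g j0) ≤ α * (r * D) := by
    have := (hemb x0 x1).2
    rw [hA] at this
    calc a (g j0) ≤ α * (r * dist x0 x1) := this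
      _ ≤ α * (r * D) := by
          apply mul_le_mul_of_nonneg_left _ (by linarith)
          exact mul_le_mul_of_nonneg_left hDle (le_of_lt hr)
  have hmain : k ^ (m - 2) * (r * δ) ≤ α * (r * D) := by
    calc k ^ (m - 2) * (r * δ) ≤ k ^ (m - 2) * a (g ja) :=
          mul_le_mul_of_nonneg_left hlow (by positivity)
      _ = a (g ja) * k ^ (m - 2) := mul_comm _ _
      _ ≤ a (g j0) := hchain
      _ ≤ α * (r * D) := hhigh
  have hfinal : k ^ (m - 2) ≤ α * (D / δ) := by
    rw [← sub_nonneg]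
    have : α * (D / δ) - k ^ (m - 2) = (α * (r * D) - k ^ (m - 2) * (r * δ)) / (r * δ) := by
      field_simp
    rw [this]
    apply div_nonneg (by linarith) (by positivity)
  have hkpos : (0:ℝ) < k := lt_trans one_pos hk
  have hδle01 : δ ≤ dist x0 x1 := csInf_le hsetfin.bddBelow ⟨x0, x1, hx01, rfl⟩
  have hDpos : 0 < D := lt_of_lt_of_le hδpos (hδle01.trans hDle)
  have hΦ : aspectRatio X = D / δ := rfl
  have hlog : ((m - 2 : ℕ) : ℝ) ≤ Real.logb k (α * aspectRatio X) := by
    rw [hΦ]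
    calc ((m - 2 : ℕ) : ℝ) = Real.logb k (k ^ (m - 2)) := by
          rw [Real.logb_pow, Real.logb_self_eq_one hk, mul_one]
      _ ≤ Real.logb k (α * (D / δ)) :=
          (Real.logb_le_logb hk (by positivity) (mul_pos (by linarith) (div_pos hDpos hδpos))).mpr hfinal
  have hcast : ((m - 2 : ℕ) : ℝ) = (m : ℝ) - 2 := by
    rw [Nat.cast_sub hm]
    norm_num
  rw [hcast] at hlog
  linarith
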